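/- Let k be an algebraically closed field, m ≥ 2n, and let τ be an endomorphism of k^m such that every eigenspace of τ has dimension at most m − n. Then there exists an n-dimensional linear subspace V of k^m such that dim(V + τ(V)) = 2n, i.e. V ∩ τ(V) = 0 and τ is injective on V. -/

import Mathlib

open Module Submodule LinearMap

universe u v

section Helpers

variable {k : Type u} [Field k] {E : Type v} [AddCommGroup E] [Module k E]

lemma avoid_two (A B : Submodule k E) (hA : A ≠ ⊤) (hB : B ≠ ⊤) :
    ∃ v, v ∉ A ∧ v ∉ B := by
  have ha : ∃ a, a ∉ A := by
    by_contra hc; push_neg at hc; exact hA (Submodule.eq_top_iff'.mpr hc)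
  have hb : ∃ b, b ∉ B := by
    by_contra hc; push_neg at hc; exact hB (Submodule.eq_top_iff'.mpr hc)
  obtain ⟨a, ha⟩ := ha; obtain ⟨b, hb⟩ := hb
  by_cases hab : a ∈ B
  · by_cases hba : b ∈ A
    · refine ⟨a + b, fun hc => ?_, fun hc => ?_⟩
      · exact ha (by simpa using A.sub_mem hc hba)
      · exact hb (by simpa using B.sub_mem hc hab)
    · exact ⟨b, hba, hb⟩
  · exact ⟨a, ha, hab⟩

lemma not_top_of_finrank_lt [FiniteDimensional k E] {A : Submodule k E}
    (h : finrank k ↥A < finrank k E) : A ≠ ⊤ := by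
  rintro rfl
  rw [finrank_top] at h
  exact lt_irrefl _ h

lemma exists_not_mem_of_finrank_lt [FiniteDimensional k E] {A : Submodule k E}
    (h : finrank k ↥A < finrank k E) : ∃ v, v ∉ A := by
  obtain ⟨v, hv, -⟩ := avoid_two A A (not_top_of_finrank_lt h) (not_top_of_finrank_lt h)
  exact ⟨v, hv⟩

lemma finrank_sup_span_singleton [FiniteDimensional k E] {A : Submodule k E} {v : E}
    (hv : v ∉ A) : finrank k ↥(A ⊔ span k {v}) = finrank k ↥A + 1 := by
  have hv0 : v ≠ 0 := fun h => hv (h ▸ A.zero_mem)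
  have hinf : A ⊓ span k {v} = ⊥ := by
    rw [eq_bot_iff]
    rintro x hx
    obtain ⟨hxA, hxs⟩ := Submodule.mem_inf.mp hx
    obtain ⟨c, rfl⟩ := Submodule.mem_span_singleton.mp hxs
    rcases eq_or_ne c 0 with rfl | hc
    · simp
    · exact absurd (by simpa [smul_smul, inv_mul_cancel₀ hc] using A.smul_mem c⁻¹ hxA) hv
  have h2 := Submodule.finrank_sup_add_finrank_inf_eq A (span k {v})
  rw [hinf, finrank_span_singleton hv0, finrank_bot, add_zero] at h2
  exact h2

lemma exists_smul_of_forall_smul (g : Module.End k E)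
    (h : ∀ x : E, ∃ c : k, g x = c • x) :
    ∃ c : k, ∀ x : E, g x = c • x := by
  by_cases hE : ∃ x₀ : E, x₀ ≠ 0
  · obtain ⟨x₀, hx₀⟩ := hE
    obtain ⟨c₀, hc₀⟩ := h x₀
    refine ⟨c₀, fun x => ?_⟩
    by_cases hx : x ∈ span k {x₀}
    · obtain ⟨a, rfl⟩ := Submodule.mem_span_singleton.mp hx
      rw [map_smul, hc₀, smul_smul, smul_smul, mul_comm]
    · obtain ⟨c, hc⟩ := h x
      obtain ⟨c', hc'⟩ := h (x + x₀)
      have hadd : c' • x + c' • x₀ = c • x + c₀ • x₀ := by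
        rw [← smul_add, ← hc', map_add, hc, hc₀]
      have hxx : (c' - c) • x = (c₀ - c') • x₀ := by
        rw [sub_smul, sub_smul, sub_eq_sub_iff_add_eq_add]
        rw [hadd]
        rw [add_comm]
      have hcc : c' = c := by
        by_contra hne
        apply hx
        have hx' : x = ((c' - c)⁻¹ * (c₀ - c')) • x₀ := by
          rw [mul_smul, ← hxx, smul_smul, inv_mul_cancel₀ (sub_ne_zero.mpr hne), one_smul]
        rw [hx']
        exact Submodule.smul_mem _ _ (Submodule.mem_span_singleton_self x₀)
      have hz : (c₀ - c') • x₀ = 0 := by rw [← hxx, hcc, sub_self, zero_smul]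
      have hc0c : c₀ = c := by
        rcases smul_eq_zero.mp hz with h1 | h1
        · have := sub_eq_zero.mp h1; rw [this, hcc]
        · exact absurd h1 hx₀
      rw [hc, hc0c]
  · push_neg at hE
    exact ⟨0, fun x => by rw [hE x, map_zero, smul_zero]⟩

lemma sup_map_sub_smul (V : Submodule k E) (f : Module.End k E) (c : k) :
    V ⊔ V.map (f - c • (1 : Module.End k E)) = V ⊔ V.map f := by
  apply le_antisymm
  · refine sup_le le_sup_left ?_
    rintro _ ⟨x, hx, rfl⟩
    have he : (f - c • (1 : Module.End k E)) x = f x - c • x := by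
      simp [LinearMap.sub_apply]
    rw [he]
    exact sub_mem (mem_sup_right ⟨x, hx, rfl⟩) (mem_sup_left (V.smul_mem c hx))
  · refine sup_le le_sup_left ?_
    rintro _ ⟨x, hx, rfl⟩
    have he : f x = (f - c • (1 : Module.End k E)) x + c • x := by
      simp [LinearMap.sub_apply]
    rw [he]
    exact add_mem (mem_sup_right ⟨x, hx, rfl⟩) (mem_sup_left (V.smul_mem c hx))

lemma ext_lemma [FiniteDimensional k E] (σ : Module.End k E) (t : ℕ) :
    ∀ (W₀ : Submodule k E),
      finrank k ↥W₀ + t + finrank k ↥(LinearMap.ker σ) ≤ finrank k E →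
      finrank k ↥(LinearMap.range σ) + t ≤ finrank k E →
      ∃ V₂ : Submodule k E, finrank k ↥V₂ = t ∧
        finrank k ↥(LinearMap.range σ ⊔ V₂) = finrank k ↥(LinearMap.range σ) + t ∧
        finrank k ↥(W₀ ⊔ V₂.map σ) = finrank k ↥W₀ + t := by
  induction t with
  | zero =>
    intro W₀ _ _
    refine ⟨⊥, by simp, ?_, ?_⟩
    · rw [sup_bot_eq, add_zero]
    · rw [Submodule.map_bot, sup_bot_eq, add_zero]
  | succ t IH =>
    intro W₀ h1 h2
    obtain ⟨V₂, hV1, hV2, hV3⟩ := IH W₀ (by omega) (by omega)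
    have hrn := LinearMap.finrank_range_add_finrank_ker σ
    have hA : (LinearMap.range σ ⊔ V₂) ≠ ⊤ := not_top_of_finrank_lt (by rw [hV2]; omega)
    have hBne : (W₀ ⊔ V₂.map σ).comap σ ≠ ⊤ := by
      intro htop
      have hle : LinearMap.range σ ≤ W₀ ⊔ V₂.map σ := by
        rintro _ ⟨v, rfl⟩
        have hv : v ∈ (W₀ ⊔ V₂.map σ).comap σ := htop ▸ Submodule.mem_top
        exact hv
      have hle2 := Submodule.finrank_mono hle
      rw [hV3] at hle2; omega
    obtain ⟨v, hvA, hvB⟩ := avoid_two _ _ hA hBne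
    have hvV₂ : v ∉ V₂ := fun hc => hvA (mem_sup_right hc)
    have hσv : σ v ∉ W₀ ⊔ V₂.map σ := fun hc => hvB (Submodule.mem_comap.mpr hc)
    refine ⟨V₂ ⊔ span k {v}, ?_, ?_, ?_⟩
    · rw [_root_.finrank_sup_span_singleton hvV₂, hV1]
    · rw [← sup_assoc, _root_.finrank_sup_span_singleton hvA, hV2]; omega
    · rw [Submodule.map_sup, Submodule.map_span, Set.image_singleton, ← sup_assoc,
        _root_.finrank_sup_span_singleton hσv, hV3]; omega

end Helpers

theorem aux_pairs {k : Type u} [Field k] :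
    ∀ (m : ℕ) {E : Type v} [AddCommGroup E] [Module k E] [FiniteDimensional k E]
    (f : Module.End k E), finrank k E = m →
    ∀ n : ℕ, 2 * n ≤ m →
    (∀ μ : k, finrank k ↥(LinearMap.ker (f - μ • (1 : Module.End k E))) + n ≤ m) →
    ∃ V : Submodule k E, finrank k ↥V = n ∧ finrank k ↥(V ⊔ V.map f) = 2 * n := by
  intro m
  induction m using Nat.strong_induction_on with
  | _ m IH =>
    intro E _ _ _ f hm n
    induction n with
    | zero =>
      intro _ _
      exact ⟨⊥, by simp, by simp⟩
    | succ p IHn =>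
      intro hn h
      obtain ⟨V', hV'1, hV'2⟩ := IHn (by omega) (fun μ => by have := h μ; omega)
      set W' : Submodule k E := V' ⊔ V'.map f with hW'def
      have hfW' : finrank k ↥W' = 2 * p := hV'2
      by_cases hB : ∀ v : E, f v ∈ W' ⊔ span k {v}
      · -- Case B : quotient is scalar
        have hfW'le : ∀ w ∈ W', f w ∈ W' := by
          intro w hw
          have hb := hB w
          have hsp : span k {w} ≤ W' := (span_singleton_le_iff_mem _ _).mpr hw
          rwa [sup_eq_left.mpr hsp] at hb
        have hcm : W' ≤ W'.comap f := fun w hw => hfW'le w hw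
        set fbar := W'.mapQ W' f hcm with hfbar
        have hquot : ∀ y : E ⧸ W', ∃ c : k, fbar y = c • y := by
          intro y
          obtain ⟨x, rfl⟩ := Submodule.Quotient.mk_surjective W' y
          obtain ⟨w, hw, y', hy', hsum⟩ := Submodule.mem_sup.mp (hB x)
          obtain ⟨c, rfl⟩ := Submodule.mem_span_singleton.mp hy'
          refine ⟨c, ?_⟩
          rw [Submodule.mapQ_apply, ← hsum, Submodule.Quotient.mk_add,
            (Submodule.Quotient.mk_eq_zero _).mpr hw, zero_add, Submodule.Quotient.mk_smul]
        obtain ⟨lam, hlam⟩ := exists_smul_of_forall_smul fbar hquot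
        set σ : Module.End k E := f - lam • (1 : Module.End k E) with hσ
        have hrange : LinearMap.range σ ≤ W' := by
          rintro _ ⟨x, rfl⟩
          have hz : W'.mkQ (σ x) = 0 := by
            have hx := hlam (Submodule.Quotient.mk x)
            rw [Submodule.mapQ_apply] at hx
            have hσx : σ x = f x - lam • x := by simp [hσ, LinearMap.sub_apply]
            rw [hσx, map_sub, map_smul]
            have hmk : W'.mkQ (f x) = Submodule.Quotient.mk (f x) := rfl
            have hmk2 : W'.mkQ x = Submodule.Quotient.mk x := rfl
            rw [hmk, hmk2, hx, sub_self]
          rwa [← Submodule.Quotient.mk_eq_zero]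
        set I := LinearMap.range σ with hI
        set r := finrank k ↥I with hr
        have hrle : r ≤ 2 * p := hfW' ▸ Submodule.finrank_mono hrange
        have hrn : r + finrank k ↥(LinearMap.ker σ) = m := by
          rw [← hm, hr]; exact LinearMap.finrank_range_add_finrank_ker σ
        have hker0 : finrank k ↥(LinearMap.ker σ) + (p + 1) ≤ m := h lam
        set n₂ := min (p + 1) (m - r) with hn₂
        set n₁ := (p + 1) - n₂ with hn₁
        have hIinv : ∀ x ∈ I, σ x ∈ I := fun x _ => LinearMap.mem_range_self σ x
        set σ' : Module.End k ↥I := σ.restrict hIinv with hσ'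
        have hkerres : ∀ μ : k,
            finrank k ↥(LinearMap.ker (σ' - μ • (1 : Module.End k ↥I))) + n₁ ≤ r := by
          intro μ
          have hle : (LinearMap.ker (σ' - μ • (1 : Module.End k ↥I))).map I.subtype ≤
              LinearMap.ker (σ - μ • (1 : Module.End k E)) := by
            rintro _ ⟨x, hx, rfl⟩
            rw [SetLike.mem_coe, LinearMap.mem_ker] at hx
            rw [LinearMap.mem_ker]
            have hco : ((σ' - μ • (1 : Module.End k ↥I)) x : E) = σ (x : E) - μ • (x : E) := by
              simp [LinearMap.sub_apply, LinearMap.smul_apply, Module.End.one_apply, hσ',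
                LinearMap.restrict_coe_apply]
            have : σ ((x : E)) - μ • (x : E) = 0 := by rw [← hco, hx]; rfl
            simpa [LinearMap.sub_apply, LinearMap.smul_apply, Module.End.one_apply] using this
          have hsub : finrank k ↥(LinearMap.ker (σ' - μ • (1 : Module.End k ↥I))) ≤
              finrank k ↥(LinearMap.ker (σ - μ • (1 : Module.End k E))) := by
            rw [← Submodule.finrank_map_subtype_eq I]
            exact Submodule.finrank_mono hle
          have hEq : LinearMap.ker (σ - μ • (1 : Module.End k E)) =
              LinearMap.ker (f - (lam + μ) • (1 : Module.End k E)) := by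
            rw [hσ, sub_sub, ← add_smul]
          have hμ := h (lam + μ)
          rw [← hEq] at hμ
          have hsub2 : finrank k ↥(LinearMap.ker (σ' - μ • (1 : Module.End k ↥I))) ≤ r := by
            rw [hr]; exact Submodule.finrank_le _
          omega
        obtain ⟨V₁, hV₁a, hV₁b⟩ := IH r (by omega) σ' hr.symm n₁ (by omega) hkerres
        set V₁' := V₁.map I.subtype with hV₁'
        set W₀ := (V₁ ⊔ V₁.map σ').map I.subtype with hW₀
        have hW₀r : finrank k ↥W₀ = 2 * n₁ := by
          rw [hW₀, Submodule.finrank_map_subtype_eq]; exact hV₁b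
        obtain ⟨V₂, hV₂a, hV₂b, hV₂c⟩ := ext_lemma σ n₂ W₀
          (by rw [hm, hW₀r]; omega) (by rw [hm, ← hr]; omega)
        rw [← hI] at hV₂b
        have hI_V₂ : I ⊓ V₂ = ⊥ := by
          have h5 := Submodule.finrank_sup_add_finrank_inf_eq I V₂
          rw [hV₂b, hV₂a, ← hr] at h5
          have h6 : finrank k ↥(I ⊓ V₂) = 0 := by omega
          exact Submodule.finrank_eq_zero.mp h6
        have hV₁'I : V₁' ≤ I := by
          rw [hV₁']; exact Submodule.map_subtype_le _ _
        have hV₁'r : finrank k ↥V₁' = n₁ := by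
          rw [hV₁', Submodule.finrank_map_subtype_eq]; exact hV₁a
        have hV₁'V₂ : V₁' ⊓ V₂ = ⊥ :=
          le_bot_iff.mp (hI_V₂ ▸ inf_le_inf_right V₂ hV₁'I)
        have hVr : finrank k ↥(V₁' ⊔ V₂) = p + 1 := by
          have h6 := Submodule.finrank_sup_add_finrank_inf_eq V₁' V₂
          rw [hV₁'V₂, hV₁'r, hV₂a, finrank_bot, add_zero] at h6
          omega
        have hcomp : I.subtype ∘ₗ σ' = σ ∘ₗ I.subtype := by
          ext x
          simp only [LinearMap.comp_apply, hσ']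
          exact LinearMap.restrict_coe_apply σ hIinv x
        have hW₀eq : W₀ = V₁' ⊔ V₁'.map σ := by
          rw [hW₀, Submodule.map_sup, hV₁']
          congr 1
          rw [← Submodule.map_comp, ← Submodule.map_comp, hcomp]
        have hXI : W₀ ⊔ V₂.map σ ≤ I := by
          refine sup_le ?_ ?_
          · rw [hW₀]; exact Submodule.map_subtype_le _ _
          · rw [hI]; exact LinearMap.map_le_range
        have hXV₂ : (W₀ ⊔ V₂.map σ) ⊓ V₂ = ⊥ :=
          le_bot_iff.mp (hI_V₂ ▸ inf_le_inf_right V₂ hXI)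
        have hTX : (V₁' ⊔ V₂) ⊔ (V₁' ⊔ V₂).map f = (W₀ ⊔ V₂.map σ) ⊔ V₂ := by
          have hs : (V₁' ⊔ V₂) ⊔ (V₁' ⊔ V₂).map σ = (W₀ ⊔ V₂.map σ) ⊔ V₂ := by
            rw [Submodule.map_sup, hW₀eq, sup_sup_sup_comm, sup_assoc,
              sup_comm V₂ (V₂.map σ), ← sup_assoc, ← sup_assoc]
          rw [← hs, hσ, sup_map_sub_smul]
        have hfinal : finrank k ↥((V₁' ⊔ V₂) ⊔ (V₁' ⊔ V₂).map f) = 2 * (p + 1) := by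
          rw [hTX]
          have h7 := Submodule.finrank_sup_add_finrank_inf_eq (W₀ ⊔ V₂.map σ) V₂
          rw [hXV₂, finrank_bot, add_zero, hV₂c, hW₀r, hV₂a] at h7
          rw [h7]; omega
        exact ⟨V₁' ⊔ V₂, hVr, hfinal⟩
      · -- Case A : extension possible
        push_neg at hB
        obtain ⟨v, hv⟩ := hB
        have hW'lt : finrank k ↥W' < finrank k E := by rw [hfW', hm]; omega
        have key : ∃ u, u ∉ W' ∧ f u ∉ W' ⊔ span k {u} := by
          by_cases hvW : v ∈ W'
          · by_contra hcon
            push_neg at hcon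
            -- hcon : ∀ u, u ∉ W' → f u ∈ W' ⊔ span k {u}
            have hfvW : f v ∉ W' := by
              intro hc
              exact hv (mem_sup_left hc)
            obtain ⟨u₁, hu₁⟩ := exists_not_mem_of_finrank_lt hW'lt
            have hWu₁lt : finrank k ↥(W' ⊔ span k {u₁}) < finrank k E := by
              rw [_root_.finrank_sup_span_singleton hu₁, hfW', hm]; omega
            obtain ⟨u₂, hu₂⟩ := exists_not_mem_of_finrank_lt hWu₁lt
            have hu₂W : u₂ ∉ W' := fun hc => hu₂ (mem_sup_left hc)
            have hfvu : ∀ u : E, u ∉ W' → f v ∈ W' ⊔ span k {u} := by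
              intro u hu
              have hvu : v + u ∉ W' := fun hc => hu (by simpa using W'.sub_mem hc hvW)
              have h3 := hcon (v + u) hvu
              have h4 : span k {v + u} ≤ W' ⊔ span k {u} := by
                rw [span_singleton_le_iff_mem]
                exact add_mem (mem_sup_left hvW)
                  (mem_sup_right (Submodule.mem_span_singleton_self u))
              have h5 : f (v + u) ∈ W' ⊔ span k {u} := by
                refine (sup_le (le_sup_left) h4 : W' ⊔ span k {v + u} ≤ _) h3
              have h6 := hcon u hu
              rw [map_add] at h5
              have := sub_mem h5 h6
              simpa using this
            have hfv1 := hfvu u₁ hu₁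
            have hfv2 := hfvu u₂ hu₂W
            obtain ⟨w₂, hw₂, y₂, hy₂, hsum₂⟩ := Submodule.mem_sup.mp hfv2
            obtain ⟨c₂, rfl⟩ := Submodule.mem_span_singleton.mp hy₂
            rcases eq_or_ne c₂ 0 with rfl | hc₂
            · refine hfvW ?_
              rw [← hsum₂, zero_smul, add_zero]; exact hw₂
            · refine hu₂ ?_
              have hu₂eq : u₂ = c₂⁻¹ • (f v - w₂) := by
                rw [← hsum₂]
                simp [smul_smul, inv_mul_cancel₀ hc₂]
              rw [hu₂eq]
              exact Submodule.smul_mem _ _ (sub_mem hfv1 (mem_sup_left hw₂))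
          · exact ⟨v, hvW, hv⟩
        obtain ⟨u, huW, hfu⟩ := key
        have hV'W : V' ≤ W' := le_sup_left
        have huV' : u ∉ V' := fun hc => huW (hV'W hc)
        refine ⟨V' ⊔ span k {u}, ?_, ?_⟩
        · rw [_root_.finrank_sup_span_singleton huV', hV'1]
        · have heq : (V' ⊔ span k {u}) ⊔ (V' ⊔ span k {u}).map f
              = (W' ⊔ span k {u}) ⊔ span k {f u} := by
            rw [Submodule.map_sup, Submodule.map_span, Set.image_singleton,
              sup_sup_sup_comm, ← sup_assoc, ← hW'def]
          rw [heq, _root_.finrank_sup_span_singleton hfu, _root_.finrank_sup_span_singleton huW, hfW']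
          omega

theorem stmt_2 (k : Type*) [Field k] [IsAlgClosed k] (n m : ℕ) (hn : 0 < n)
    (hm : 2 * n ≤ m) (τ : Module.End k (Fin m → k))
    (h : ∀ lam : k, Module.finrank k (Module.End.eigenspace τ lam) ≤ m - n) :
    ∃ V : Submodule k (Fin m → k),
      Module.finrank k V = n ∧ Module.finrank k ↥(V ⊔ V.map τ) = 2 * n := by
  have hmE : finrank k (Fin m → k) = m := Module.finrank_fin_fun k
  have h' : ∀ μ : k, finrank k ↥(LinearMap.ker (τ - μ • (1 : Module.End k (Fin m → k)))) + n ≤ m := by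
    intro μ
    have h1 := h μ
    have h2 : Module.End.eigenspace τ μ = LinearMap.ker (τ - μ • (1 : Module.End k (Fin m → k))) := by
      ext x
      rw [Module.End.mem_eigenspace_iff, LinearMap.mem_ker, LinearMap.sub_apply,
        LinearMap.smul_apply, Module.End.one_apply, sub_eq_zero]
    rw [h2] at h1
    omega
  exact aux_pairs m τ hmE n hm h'
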